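/- Let (g, ⋆) be a prelie algebra with the extended product * on S(g) as in the Oudom–Guin construction. Then S_{≥2}(g) = ⊕_{n≥2} S^n(g) is a left ideal of (S(g), *). -/

import Mathlib

/-!
Oudom–Guin extension of a prelie product. We model the prelie algebra g as the
degree-one component V of S(g) = `MvPolynomial σ K` (σ indexing a basis of g), and
quantify over a bilinear map `star` on S(g) satisfying the defining equations of the
Oudom–Guin extension:
  1 ⋆ P = P,  (xP) ⋆ y = x ⋆ (P ⋆ y) − (x ⋆ P) ⋆ y,  P ⋆ (QR) = Σ (P⁽¹⁾ ⋆ Q)(P⁽²⁾ ⋆ R),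
together with the prelie axioms on g.
-/

open TensorProduct

noncomputable section

/-- The coproduct of the symmetric coalgebra. -/
def scomul (K : Type*) [Field K] (σ : Type*) :
    MvPolynomial σ K →ₐ[K] MvPolynomial σ K ⊗[K] MvPolynomial σ K :=
  MvPolynomial.aeval fun i => MvPolynomial.X i ⊗ₜ[K] 1 + 1 ⊗ₜ[K] MvPolynomial.X i

/-- S_{≥2}(g) = ⊕_{n ≥ 2} S^n(g). -/
def Sge2 (K : Type*) [Field K] (σ : Type*) : Submodule K (MvPolynomial σ K) :=
  ⨆ n : ℕ, ⨆ _ : 2 ≤ n, MvPolynomial.homogeneousSubmodule σ K n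

variable {K : Type*} [Field K] [CharZero K] {σ : Type*}

/-- The hypotheses on `star`: it restricts to a prelie product on g = S¹(g) and satisfies
the defining recursions of the Oudom–Guin extension to S(g). -/
structure IsOGExtension
    (star : MvPolynomial σ K →ₗ[K] MvPolynomial σ K →ₗ[K] MvPolynomial σ K) : Prop where
  one_star : ∀ P : MvPolynomial σ K, star 1 P = P
  mem_g : ∀ x ∈ MvPolynomial.homogeneousSubmodule σ K 1,
    ∀ y ∈ MvPolynomial.homogeneousSubmodule σ K 1,
      star x y ∈ MvPolynomial.homogeneousSubmodule σ K 1
  prelie : ∀ x ∈ MvPolynomial.homogeneousSubmodule σ K 1,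
    ∀ y ∈ MvPolynomial.homogeneousSubmodule σ K 1,
      ∀ z ∈ MvPolynomial.homogeneousSubmodule σ K 1,
        star (star x y) z - star x (star y z) = star (star y x) z - star y (star x z)
  mul_star : ∀ x ∈ MvPolynomial.homogeneousSubmodule σ K 1,
    ∀ P : MvPolynomial σ K, ∀ y ∈ MvPolynomial.homogeneousSubmodule σ K 1,
      star (x * P) y = star x (star P y) - star (star x P) y
  star_mul : ∀ P Q R : MvPolynomial σ K,
    star P (Q * R) =
      LinearMap.mul' K (MvPolynomial σ K)
        (TensorProduct.map (star.flip Q) (star.flip R) (scomul K σ P))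

/-- The associated associative product P * Q = Σ P⁽¹⁾ (P⁽²⁾ ⋆ Q). -/
def ogMul (star : MvPolynomial σ K →ₗ[K] MvPolynomial σ K →ₗ[K] MvPolynomial σ K)
    (P Q : MvPolynomial σ K) : MvPolynomial σ K :=
  LinearMap.mul' K (MvPolynomial σ K)
    (TensorProduct.map LinearMap.id (star.flip Q) (scomul K σ P))

namespace OGAux

open MvPolynomial

/-- induction over homogeneous polynomials via monomials -/
lemma homog_induction {n : ℕ} {p : MvPolynomial σ K → Prop} (h0 : p 0)
    (hadd : ∀ a b, p a → p b → p (a + b))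
    (hmono : ∀ (d : σ →₀ ℕ) (c : K), d.degree = n → p (monomial d c)) :
    ∀ Q ∈ homogeneousSubmodule σ K n, p Q := by
  intro Q hQ
  rw [Q.as_sum]
  apply Finset.sum_induction _ p hadd h0
  intro d hd
  apply hmono
  have := hQ (mem_support_iff.mp hd)
  rwa [Finsupp.degree_eq_weight_one]

lemma monomial_succ (d : σ →₀ ℕ) (c : K) {n : ℕ} (hd : d.degree = n + 1) :
    ∃ (i : σ) (d' : σ →₀ ℕ), d'.degree = n ∧ monomial d c = X i * monomial d' c := by
  have hne : d ≠ 0 := by rintro rfl; simp [map_zero] at hd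
  obtain ⟨i, hi⟩ := Finsupp.ne_iff.mp hne
  simp only [Finsupp.coe_zero, Pi.zero_apply] at hi
  have hle : Finsupp.single i 1 ≤ d :=
    Finsupp.single_le_iff.mpr (Nat.one_le_iff_ne_zero.mpr hi)
  have hadd : Finsupp.single i 1 + (d - Finsupp.single i 1) = d := by
    rw [add_comm]; exact tsub_add_cancel_of_le hle
  refine ⟨i, d - Finsupp.single i 1, ?_, ?_⟩
  · have h1 : (Finsupp.single i 1).degree = 1 := by
      simp [Finsupp.degree_apply, Finsupp.support_single_ne_zero]
    have h2 : (Finsupp.single i 1).degree + (d - Finsupp.single i 1).degree = d.degree := by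
      rw [Finsupp.degree_eq_weight_one, ← map_add, hadd]
    omega
  · have h3 := monomial_single_add (R := K) (n := i) (e := 1) (s := d - Finsupp.single i 1) (a := c)
    rw [pow_one, hadd] at h3
    exact h3

variable {star : MvPolynomial σ K →ₗ[K] MvPolynomial σ K →ₗ[K] MvPolynomial σ K}
  (hstar : IsOGExtension star)

lemma scomul_X (i : σ) :
    scomul K σ (X i) = X i ⊗ₜ[K] (1 : MvPolynomial σ K) + 1 ⊗ₜ[K] X i :=
  MvPolynomial.aeval_X _ i

include hstar

lemma star_X_mul (i : σ) (A B : MvPolynomial σ K) :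
    star (X i) (A * B) = star (X i) A * B + A * star (X i) B := by
  rw [hstar.star_mul]
  simp [scomul_X, TensorProduct.map_tmul, LinearMap.mul'_apply, LinearMap.flip_apply,
    hstar.one_star]

lemma star_X_one (i : σ) : star (X i) (1 : MvPolynomial σ K) = 0 := by
  have h := star_X_mul hstar i 1 1
  simp only [mul_one, one_mul] at h
  exact (left_eq_add.mp h)

/-- star (X i) preserves degree. -/
lemma star_X_mem (n : ℕ) : ∀ Q ∈ homogeneousSubmodule σ K n, ∀ i : σ,
    star (X i) Q ∈ homogeneousSubmodule σ K n := by
  induction n with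
  | zero =>
    refine homog_induction (by simp) (fun a b ha hb i => ?_) (fun d c hd i => ?_)
    · simpa using add_mem (ha i) (hb i)
    · rw [Finsupp.degree_eq_zero_iff] at hd
      subst hd
      have h : (monomial (0 : σ →₀ ℕ) c : MvPolynomial σ K) = c • 1 := by
        rw [monomial_zero', smul_eq_C_mul, mul_one]
      rw [h, map_smul, star_X_one hstar, smul_zero]
      exact zero_mem _
  | succ n ih =>
    refine homog_induction (by simp) (fun a b ha hb i => ?_) (fun d c hd i => ?_)
    · simpa using add_mem (ha i) (hb i)
    · obtain ⟨j, d', hd', heq⟩ := monomial_succ d c hd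
      rw [heq, star_X_mul hstar]
      have hXj : (X j : MvPolynomial σ K) ∈ homogeneousSubmodule σ K 1 := isHomogeneous_X K j
      have hm : (monomial d' c : MvPolynomial σ K) ∈ homogeneousSubmodule σ K n :=
        isHomogeneous_monomial c hd'
      have h1 : star (X i) (X j) * monomial d' c ∈ homogeneousSubmodule σ K (n + 1) := by
        have := (hstar.mem_g _ (isHomogeneous_X K i) _ hXj).mul hm
        rwa [add_comm] at this
      have h2 : X j * star (X i) (monomial d' c) ∈ homogeneousSubmodule σ K (n + 1) := by
        have := hXj.mul (ih _ hm i)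
        rwa [add_comm] at this
      exact add_mem h1 h2

/-- star of a homogeneous P against a degree-1 element is degree 1. -/
lemma star_homog_deg1 (m : ℕ) : ∀ P ∈ homogeneousSubmodule σ K m,
    ∀ Q ∈ homogeneousSubmodule σ K 1, star P Q ∈ homogeneousSubmodule σ K 1 := by
  induction m with
  | zero =>
    refine homog_induction (by simp) (fun a b ha hb Q hQ => ?_) (fun d c hd Q hQ => ?_)
    · simpa using add_mem (ha Q hQ) (hb Q hQ)
    · rw [Finsupp.degree_eq_zero_iff] at hd
      subst hd
      have h : (monomial (0 : σ →₀ ℕ) c : MvPolynomial σ K) = c • 1 := by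
        rw [monomial_zero', smul_eq_C_mul, mul_one]
      rw [h, map_smul]
      simp only [LinearMap.smul_apply, hstar.one_star]
      exact Submodule.smul_mem _ _ hQ
  | succ m ih =>
    refine homog_induction (by simp) (fun a b ha hb Q hQ => ?_) (fun d c hd Q hQ => ?_)
    · simpa using add_mem (ha Q hQ) (hb Q hQ)
    · obtain ⟨i, d', hd', heq⟩ := monomial_succ d c hd
      have hm : (monomial d' c : MvPolynomial σ K) ∈ homogeneousSubmodule σ K m :=
        isHomogeneous_monomial c hd'
      rw [heq, hstar.mul_star (X i) (isHomogeneous_X K i) _ Q hQ]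
      refine sub_mem ?_ ?_
      · exact hstar.mem_g _ (isHomogeneous_X K i) _ (ih _ hm Q hQ)
      · exact ih _ (star_X_mem hstar m _ hm i) Q hQ

/-- star of arbitrary P against a degree-1 element is degree 1. -/
lemma star_deg1 : ∀ Q ∈ homogeneousSubmodule σ K 1, ∀ P : MvPolynomial σ K,
    star P Q ∈ homogeneousSubmodule σ K 1 := by
  intro Q hQ P
  have hP := sum_homogeneousComponent P
  rw [← hP, map_sum, LinearMap.sum_apply]
  exact sum_mem fun k _ =>
    star_homog_deg1 hstar k _ (homogeneousComponent_isHomogeneous k P) Q hQ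

/-- star P preserves positive degree. -/
lemma star_mem (n : ℕ) : ∀ Q ∈ homogeneousSubmodule σ K (n + 1), ∀ P : MvPolynomial σ K,
    star P Q ∈ homogeneousSubmodule σ K (n + 1) := by
  induction n with
  | zero => exact star_deg1 hstar
  | succ n ih =>
    refine homog_induction (by simp) (fun a b ha hb P => ?_) (fun d c hd P => ?_)
    · simpa using add_mem (ha P) (hb P)
    · obtain ⟨j, d', hd', heq⟩ := monomial_succ d c hd
      have hm : (monomial d' c : MvPolynomial σ K) ∈ homogeneousSubmodule σ K (n + 1) :=
        isHomogeneous_monomial c hd'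
      rw [heq, hstar.star_mul]
      induction scomul K σ P using TensorProduct.induction_on with
      | zero => simpa using zero_mem _
      | tmul a b =>
        simp only [TensorProduct.map_tmul, LinearMap.mul'_apply, LinearMap.flip_apply]
        have h1 : star a (X j) ∈ homogeneousSubmodule σ K 1 :=
          star_deg1 hstar _ (isHomogeneous_X K j) a
        have h2 := ih _ hm b
        have := h1.mul h2
        rwa [show 1 + (n + 1) = n + 1 + 1 by omega] at this
      | add x y hx hy =>
        simp only [map_add, LinearMap.map_add]
        exact add_mem hx hy

end OGAux

open OGAux MvPolynomial in
/-- S_{≥2}(g) is a left ideal of (S(g), *). -/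
theorem stmt4 (star : MvPolynomial σ K →ₗ[K] MvPolynomial σ K →ₗ[K] MvPolynomial σ K)
    (hstar : IsOGExtension star) :
    ∀ P : MvPolynomial σ K, ∀ Q ∈ Sge2 K σ, ogMul star P Q ∈ Sge2 K σ := by
  intro P Q hQ
  have hle : ∀ m : ℕ, 2 ≤ m → homogeneousSubmodule σ K m ≤ Sge2 K σ := by
    intro m hm
    exact le_trans (le_iSup (fun _ : 2 ≤ m => homogeneousSubmodule σ K m) hm)
      (le_iSup (fun n : ℕ => ⨆ _ : 2 ≤ n, homogeneousSubmodule σ K n) m)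
  refine Submodule.iSup_induction _ (motive := fun Q => ogMul star P Q ∈ Sge2 K σ) hQ
    (fun n Q hQn => ?_) (by simp [ogMul]) (fun x y hx hy => ?_)
  · -- Q ∈ ⨆ _ : 2 ≤ n, homogeneousSubmodule σ K n
    refine Submodule.iSup_induction _ (motive := fun Q => ogMul star P Q ∈ Sge2 K σ) hQn
      (fun hn Q hQ' => ?_) (by simp [ogMul]) (fun x y hx hy => ?_)
    · -- Q homogeneous of degree n, 2 ≤ n
      obtain ⟨n', rfl⟩ : ∃ n', n = n' + 1 := ⟨n - 1, by omega⟩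
      unfold ogMul
      induction scomul K σ P using TensorProduct.induction_on with
      | zero => simpa using zero_mem _
      | tmul a b =>
        simp only [TensorProduct.map_tmul, LinearMap.mul'_apply, LinearMap.flip_apply,
          LinearMap.id_coe, id_eq]
        have hb : star b Q ∈ homogeneousSubmodule σ K (n' + 1) := star_mem hstar n' _ hQ' b
        have ha := sum_homogeneousComponent a
        rw [← ha, Finset.sum_mul]
        refine sum_mem fun k _ => ?_
        exact hle (k + (n' + 1)) (by omega)
          ((homogeneousComponent_isHomogeneous k a).mul hb)
      | add x y hx hy =>
        simp only [map_add, LinearMap.map_add]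
        exact add_mem hx hy
    · have : ogMul star P (x + y) = ogMul star P x + ogMul star P y := by
        simp [ogMul, map_add, TensorProduct.map_add_right]
      show ogMul star P (x + y) ∈ Sge2 K σ
      rw [this]; exact add_mem hx hy
  · have : ogMul star P (x + y) = ogMul star P x + ogMul star P y := by
      simp [ogMul, map_add, TensorProduct.map_add_right]
    show ogMul star P (x + y) ∈ Sge2 K σ
    rw [this]; exact add_mem hx hy
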